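/- In the setting of the ruled hypersurface ψ̂(t,z) = (z₁,…,z_{n-1}, cos(t)z_n, sin(t)z_n), the shape operator with respect to the unit normal N̂ = iξ̂ (where ξ̂ = ∂_tψ̂/|z_n|) satisfies ⟨Âξ̂, ξ̂⟩ = 0; hence the projected hypersurface in ℂPⁿ_p is minimal. -/

import Mathlib

open ComplexConjugate

/-- Real part of the indefinite Hermitian form on ℂ^{n+1}_p ≅ (Fin (n-1) → ℂ) × ℂ × ℂ. -/
noncomputable def Gbig (p : ℕ) {m : ℕ} (v w : (Fin m → ℂ) × ℂ × ℂ) : ℝ :=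
  (∑ j : Fin m, (if (j : ℕ) < p then (-1 : ℝ) else 1) * (v.1 j * conj (w.1 j)).re)
    + (v.2.1 * conj w.2.1).re + (v.2.2 * conj w.2.2).re

/-- The analogous form on ℂⁿ_p ≅ (Fin (n-1) → ℂ) × ℂ. -/
noncomputable def Gsm (p : ℕ) {m : ℕ} (v w : (Fin m → ℂ) × ℂ) : ℝ :=
  (∑ j : Fin m, (if (j : ℕ) < p then (-1 : ℝ) else 1) * (v.1 j * conj (w.1 j)).re)
    + (v.2 * conj w.2).re

/-- For the ruled hypersurface ψ̂(t,z) = (z₁,…,z_{n-1}, cos(t)z_n, sin(t)z_n), the shape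
operator with respect to the unit normal N̂ = iξ̂, where ξ̂ = ∂ₜψ̂/|z_n|, satisfies
⟨Âξ̂, ξ̂⟩ = 0, where Âξ̂ = -(d/ds)|_{s=0} N̂ along the integral curve
α(s) = ψ̂(t + s/|z_n|, z) of ξ̂. -/
theorem stmt14 (n p : ℕ) (hn : 3 ≤ n) (hp1 : 1 ≤ p) (hpn : p ≤ n - 2)
    (w : Fin (n - 1) → ℂ) (zn : ℂ) (hzn : zn ≠ 0)
    (hz : Gsm p (w, zn) (w, zn) = 1) (t : ℝ)
    (Nfun : ℝ → (Fin (n - 1) → ℂ) × ℂ × ℂ)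
    (hNfun : Nfun = fun τ => ((0 : Fin (n - 1) → ℂ),
      (Complex.I / ((‖zn‖ : ℝ) : ℂ)) * (-(((Real.sin τ : ℝ) : ℂ) * zn)),
      (Complex.I / ((‖zn‖ : ℝ) : ℂ)) * (((Real.cos τ : ℝ) : ℂ) * zn)))
    (ξh : (Fin (n - 1) → ℂ) × ℂ × ℂ)
    (hξh : ξh = ((1 / ‖zn‖ : ℝ) •
      (((0 : Fin (n - 1) → ℂ), -(((Real.sin t : ℝ) : ℂ) * zn),
        ((Real.cos t : ℝ) : ℂ) * zn) : (Fin (n - 1) → ℂ) × ℂ × ℂ)))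
    (Aξ : (Fin (n - 1) → ℂ) × ℂ × ℂ)
    (hAξ : Aξ = -(deriv (fun s => Nfun (t + s / ‖zn‖)) 0)) :
    Gbig p Aξ ξh = 0 := by
  subst hNfun hξh hAξ
  set r : ℝ := ‖zn‖ with hrdef
  have hr0 : r ≠ 0 := by simp [hrdef, hzn]
  have hL : HasDerivAt (fun s : ℝ => t + s / r) (1 / r) 0 := by
    simpa using ((hasDerivAt_id (0 : ℝ)).div_const r).const_add t
  have hsin : HasDerivAt (fun s : ℝ => Real.sin (t + s / r))
      (Real.cos (t + 0 / r) * (1 / r)) 0 := (Real.hasDerivAt_sin _).comp 0 hL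
  have hcos : HasDerivAt (fun s : ℝ => Real.cos (t + s / r))
      (-Real.sin (t + 0 / r) * (1 / r)) 0 := (Real.hasDerivAt_cos _).comp 0 hL
  have h2 : HasDerivAt
      (fun s : ℝ => (Complex.I / (r : ℂ)) * (-(((Real.sin (t + s / r) : ℝ) : ℂ) * zn)))
      ((Complex.I / (r : ℂ)) * (-(((Real.cos (t + 0 / r) * (1 / r) : ℝ) : ℂ) * zn))) 0 := by
    exact (((hsin.ofReal_comp).mul_const zn).neg).const_mul _
  have h3 : HasDerivAt
      (fun s : ℝ => (Complex.I / (r : ℂ)) * (((Real.cos (t + s / r) : ℝ) : ℂ) * zn))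
      ((Complex.I / (r : ℂ)) * (((-Real.sin (t + 0 / r) * (1 / r) : ℝ) : ℂ) * zn)) 0 := by
    exact ((hcos.ofReal_comp).mul_const zn).const_mul _
  have h0 : HasDerivAt (fun _ : ℝ => (0 : Fin (n - 1) → ℂ)) 0 0 := hasDerivAt_const _ _
  have hD : HasDerivAt
      (fun s : ℝ => (((0 : Fin (n - 1) → ℂ),
        (Complex.I / (r : ℂ)) * (-(((Real.sin (t + s / r) : ℝ) : ℂ) * zn)),
        (Complex.I / (r : ℂ)) * (((Real.cos (t + s / r) : ℝ) : ℂ) * zn)) :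
        (Fin (n - 1) → ℂ) × ℂ × ℂ))
      (0, (Complex.I / (r : ℂ)) * (-(((Real.cos (t + 0 / r) * (1 / r) : ℝ) : ℂ) * zn)),
        (Complex.I / (r : ℂ)) * (((-Real.sin (t + 0 / r) * (1 / r) : ℝ) : ℂ) * zn)) 0 :=
    h0.prodMk (h2.prodMk h3)
  have hderiv := hD.deriv
  rw [hderiv]
  simp only [Gbig, zero_div, add_zero, Prod.fst, Prod.snd, Prod.neg_mk, Prod.smul_mk,
    Pi.neg_apply, Pi.zero_apply, neg_zero, zero_mul, map_zero, mul_zero, Complex.zero_re,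
    mul_zero, Finset.sum_const_zero, Complex.real_smul, Complex.ofReal_mul, Complex.ofReal_neg,
    Complex.ofReal_div, Complex.ofReal_one, map_mul, map_neg, Complex.conj_ofReal]
  have hzr : (zn * conj zn : ℂ) = ((r ^ 2 : ℝ) : ℂ) := by
    rw [Complex.mul_conj]
    push_cast [hrdef, Complex.sq_norm]
    simp [Complex.normSq_eq_norm_sq]
  field_simp
  ring_nf
  simp [Complex.mul_re, Complex.mul_im, Complex.div_re, Complex.div_im]
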